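/- Let L be a field extension of ℂ and let V be an L-submodule of Der_ℂ(L) that is closed under the commutator bracket of derivations (⁅v, w⁆ ∈ V for all v, w ∈ V). Let K = {x ∈ L : v x = 0 for every v ∈ V}. Let D, D₁, …, D_k ∈ Der_ℂ(L) be derivations such that ⁅D, v⁆ ∈ V and ⁅D_i, v⁆ ∈ V for every v ∈ V and every i ∈ {1,…,k}. Assume that D₁, …, D_k are linearly independent modulo V over L (i.e., if b₁, …, b_k ∈ L and b₁·D₁ + ⋯ + b_k·D_k ∈ V, then b₁ = ⋯ = b_k = 0), and that there exist a₁, …, a_k ∈ L with D − (a₁·D₁ + ⋯ + a_k·D_k) ∈ V. Then every a_i lies in K, i.e., v(a_i) = 0 for every v ∈ V and every i. -/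
import Mathlib


/-- Let `L` be a field extension of `ℂ` and `V` an `L`-submodule of
`Der_ℂ(L)` closed under the commutator bracket.  Let `K` be the field of constants of `V`.
If `D, D₁, …, D_k` are derivations normalizing `V` (i.e. `⁅D, v⁆ ∈ V` for all `v ∈ V`),
the `Dᵢ` are linearly independent modulo `V` over `L`, and
`D - (a₁ • D₁ + ⋯ + a_k • D_k) ∈ V` for some `aᵢ ∈ L`, then every `aᵢ` is a constant:
`v (aᵢ) = 0` for all `v ∈ V`. -/
theorem flat_sections_coefficients_are_first_integrals
    (L : Type*) [Field L] [Algebra ℂ L]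
    (V : Submodule L (Derivation ℂ L L))
    (hbracket : ∀ v ∈ V, ∀ w ∈ V, ⁅v, w⁆ ∈ V)
    (k : ℕ) (D : Derivation ℂ L L) (Ds : Fin k → Derivation ℂ L L)
    (hD : ∀ v ∈ V, ⁅D, v⁆ ∈ V)
    (hDs : ∀ i : Fin k, ∀ v ∈ V, ⁅Ds i, v⁆ ∈ V)
    (hindep : ∀ b : Fin k → L, (∑ i, b i • Ds i) ∈ V → ∀ i, b i = 0)
    (a : Fin k → L) (ha : D - (∑ i, a i • Ds i) ∈ V) :
    ∀ v ∈ V, ∀ i : Fin k, v (a i) = 0 := by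
  intro v hv
  have key : ∀ (f : L) (d : Derivation ℂ L L), ⁅f • d, v⁆ = f • ⁅d, v⁆ - v f • d := by
    intro f d
    ext x
    simp only [Derivation.commutator_apply, Derivation.smul_apply, Derivation.sub_apply,
      Derivation.leibniz, smul_eq_mul]
    ring
  have h1 : (∑ i, v (a i) • Ds i)
      = (∑ i, a i • ⁅Ds i, v⁆) + ⁅D - ∑ i, a i • Ds i, v⁆ - ⁅D, v⁆ := by
    have hs : ⁅(∑ i, a i • Ds i : Derivation ℂ L L), v⁆ = ∑ i, ⁅a i • Ds i, v⁆ :=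
      map_sum (AddMonoidHom.mk' (fun d : Derivation ℂ L L => ⁅d, v⁆)
        (fun x y => add_lie x y v)) _ _
    rw [sub_lie, hs]
    simp only [key]
    rw [Finset.sum_sub_distrib]
    abel
  have hmem : (∑ i, v (a i) • Ds i) ∈ V := by
    rw [h1]
    exact Submodule.sub_mem _
      (Submodule.add_mem _
        (Submodule.sum_mem _ fun i _ => Submodule.smul_mem _ _ (hDs i v hv))
        (hbracket _ ha v hv))
      (hD v hv)
  exact hindep _ hmem
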